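/- Let A, B, C ∈ ℝ^{n×n} with C invertible, and set R = I ⊗ (AC⁻¹) and S = I ⊗ B in ℝ^{n²×n²}, where I is the n×n identity matrix and ⊗ is the Kronecker product. If the pair {R+S, R−S} has the column W-property, then for every F ∈ ℝ^{n×n} the new generalized absolute value matrix equation AX + B|CX| = F has exactly one solution X ∈ ℝ^{n×n}. -/

import Mathlib

open Matrix Kronecker
open scoped NNReal

/-- Componentwise absolute value of a real matrix. -/
noncomputable def matAbs {n : ℕ} (M : Matrix (Fin n) (Fin n) ℝ) : Matrix (Fin n) (Fin n) ℝ :=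
  fun i j => |M i j|

/-- The pair {M₁, M₂} has the column W-property: every column representative matrix
(each of whose columns is the corresponding column of M₁ or of M₂) has positive
determinant. -/
def ColumnWProperty {m : Type*} [Fintype m] [DecidableEq m] (M₁ M₂ : Matrix m m ℝ) : Prop :=
  ∀ R : Matrix m m ℝ,
    (∀ j, (fun i => R i j) = (fun i => M₁ i j) ∨ (fun i => R i j) = (fun i => M₂ i j)) →
    0 < R.det

section Aux

variable {m : Type*} [Fintype m] [DecidableEq m]

lemma det_pos_combo (M₁ M₂ : Matrix m m ℝ) (h : ColumnWProperty M₁ M₂)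
    (D : m → ℝ) (hD : ∀ j, D j ∈ Set.Icc (0:ℝ) 1) :
    0 < Matrix.det (Matrix.of fun i j => D j * M₁ i j + (1 - D j) * M₂ i j) := by
  suffices H : ∀ s : Finset m, ∀ R : Matrix m m ℝ,
      (∀ j ∈ s, ∀ i, R i j = D j * M₁ i j + (1 - D j) * M₂ i j) →
      (∀ j ∉ s, (fun i => R i j) = (fun i => M₁ i j) ∨ (fun i => R i j) = (fun i => M₂ i j)) →
      0 < R.det by
    exact H Finset.univ _ (fun j _ i => rfl) (fun j hj => absurd (Finset.mem_univ j) hj)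
  intro s
  induction s using Finset.induction_on with
  | empty => intro R h1 h2; exact h R (fun j => h2 j (Finset.notMem_empty j))
  | @insert a s ha ih =>
    intro R h1 h2
    have hcol : R = R.updateCol a
        ((D a • fun i => M₁ i a) + ((1 - D a) • fun i => M₂ i a)) := by
      ext i j
      rw [Matrix.updateCol_apply]
      split_ifs with hj
      · subst hj; simpa using h1 j (Finset.mem_insert_self _ _) i
      · rfl
    have hdet : R.det = D a * (R.updateCol a fun i => M₁ i a).det
        + (1 - D a) * (R.updateCol a fun i => M₂ i a).det := by
      conv_lhs => rw [hcol]
      rw [Matrix.det_updateCol_add, Matrix.det_updateCol_smul,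
        Matrix.det_updateCol_smul]
    have key : ∀ c : m → ℝ, ((fun i => c i) = (fun i => M₁ i a) ∨ (fun i => c i) = (fun i => M₂ i a)) →
        0 < (R.updateCol a c).det := by
      intro c hc
      apply ih
      · intro j hj i
        rw [Matrix.updateCol_apply, if_neg (by rintro rfl; exact ha hj)]
        exact h1 j (Finset.mem_insert_of_mem hj) i
      · intro j hj
        by_cases hja : j = a
        · subst hja
          simpa [Matrix.updateCol_apply] using hc
        · have : (fun i => R.updateCol a c i j) = fun i => R i j := by
            funext i; rw [Matrix.updateCol_apply, if_neg hja]
          rw [this]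
          exact h2 j (by simp [hja, hj])
    have p1 := key _ (Or.inl rfl)
    have p2 := key _ (Or.inr rfl)
    obtain ⟨hD0, hD1⟩ := hD a
    rw [hdet]
    rcases lt_or_ge 0 (D a) with hlt | hle
    · have : 0 ≤ (1 - D a) * (R.updateCol a fun i => M₂ i a).det :=
        mul_nonneg (by linarith) p2.le
      nlinarith
    · have hDa : D a = 0 := le_antisymm hle hD0
      rw [hDa]; simpa using p2

def matT (M N : Matrix m m ℝ) (d : m → ℝ) : Matrix m m ℝ :=
  Matrix.of fun i j => M i j + d j * N i j

lemma det_matT_pos (M N : Matrix m m ℝ) (h : ColumnWProperty (M + N) (M - N))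
    (d : m → ℝ) (hd : ∀ j, |d j| ≤ 1) : 0 < (matT M N d).det := by
  have he : matT M N d = Matrix.of fun i j =>
      ((1 + d j) / 2) * (M + N) i j + (1 - (1 + d j) / 2) * (M - N) i j := by
    ext i j
    simp only [matT, Matrix.of_apply, Matrix.add_apply, Matrix.sub_apply]
    ring
  rw [he]
  apply det_pos_combo _ _ h
  intro j
  have := abs_le.mp (hd j)
  constructor <;> [linarith [this.1]; linarith [this.2]]

lemma matT_mulVec_ne (M N : Matrix m m ℝ) (h : ColumnWProperty (M + N) (M - N))
    (d : m → ℝ) (hd : ∀ j, |d j| ≤ 1) {v : m → ℝ} (hv : v ≠ 0) :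
    (matT M N d).mulVec v ≠ 0 := by
  intro hz
  apply hv
  have hdet : IsUnit (matT M N d).det := (det_matT_pos M N h d hd).ne'.isUnit
  have : (matT M N d)⁻¹ * matT M N d = 1 := Matrix.nonsing_inv_mul _ hdet
  calc v = ((matT M N d)⁻¹ * matT M N d).mulVec v := by rw [this, Matrix.one_mulVec]
  _ = (matT M N d)⁻¹.mulVec ((matT M N d).mulVec v) := (Matrix.mulVec_mulVec _ _ _).symm
  _ = 0 := by rw [hz, Matrix.mulVec_zero]

lemma exists_expansion [Nonempty m] (M N : Matrix m m ℝ)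
    (h : ColumnWProperty (M + N) (M - N)) :
    ∃ c : ℝ, 0 < c ∧ ∀ d : m → ℝ, (∀ j, |d j| ≤ 1) →
      ∀ v : m → ℝ, c * ‖v‖ ≤ ‖(matT M N d).mulVec v‖ := by
  set K : Set (m → ℝ) := Set.pi Set.univ (fun _ => Set.Icc (-1 : ℝ) 1) with hK
  set S : Set (m → ℝ) := Metric.sphere (0 : m → ℝ) 1 with hS
  have hKc : IsCompact K := isCompact_univ_pi fun _ => isCompact_Icc
  have hSc : IsCompact S := isCompact_sphere 0 1
  have hne : (K ×ˢ S).Nonempty := by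
    obtain ⟨v₀, hv₀⟩ := NormedSpace.sphere_nonempty (E := m → ℝ) (x := 0) (r := 1) |>.mpr zero_le_one
    exact ⟨(0, v₀), ⟨fun j _ => by simp, hv₀⟩⟩
  have hcont : Continuous fun p : (m → ℝ) × (m → ℝ) => ‖(matT M N p.1).mulVec p.2‖ := by
    apply Continuous.norm
    apply Continuous.matrix_mulVec _ continuous_snd
    apply continuous_matrix
    intro i j
    exact continuous_const.add (((continuous_apply j).comp continuous_fst).mul continuous_const)
  obtain ⟨⟨d₀, v₀⟩, hmem, hmin⟩ := (hKc.prod hSc).exists_isMinOn hne hcont.continuousOn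
  have hd₀ : ∀ j, |d₀ j| ≤ 1 := fun j => abs_le.mpr (hmem.1 j (Set.mem_univ j))
  have hv₀ : ‖v₀‖ = 1 := by
    have := hmem.2
    simpa [hS, Metric.mem_sphere, dist_zero_right] using this
  set c := ‖(matT M N d₀).mulVec v₀‖ with hc
  have hcpos : 0 < c := by
    rw [hc, norm_pos_iff]
    exact matT_mulVec_ne M N h d₀ hd₀ (by intro h0; rw [h0] at hv₀; simp at hv₀)
  refine ⟨c, hcpos, ?_⟩
  intro d hd v
  rcases eq_or_ne v 0 with rfl | hv
  · simp
  · have hnv : 0 < ‖v‖ := norm_pos_iff.mpr hv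
    have hmemv : (d, ‖v‖⁻¹ • v) ∈ K ×ˢ S := by
      constructor
      · exact fun j _ => abs_le.mp (hd j)
      · simp only [hS, mem_sphere_iff_norm, sub_zero, norm_smul, norm_inv, norm_norm]
        field_simp
    have := hmin hmemv
    simp only [Set.mem_setOf_eq, Matrix.mulVec_smul] at this
    rw [norm_smul, norm_inv, norm_norm] at this
    calc c * ‖v‖ ≤ (‖v‖⁻¹ * ‖(matT M N d).mulVec v‖) * ‖v‖ := by nlinarith
    _ = ‖(matT M N d).mulVec v‖ := by field_simp

lemma phi_diff (M N : Matrix m m ℝ) (t : ℝ) (a b : m → ℝ) :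
    ∃ d : m → ℝ, (∀ j, |d j| ≤ |t|) ∧
      (M.mulVec a + t • N.mulVec (fun i => |a i|))
        - (M.mulVec b + t • N.mulVec (fun i => |b i|))
      = (matT M N d).mulVec (a - b) := by
  set q : m → ℝ := fun i => if a i = b i then 0 else (|a i| - |b i|) / (a i - b i) with hq
  have hq1 : ∀ i, |q i| ≤ 1 := by
    intro i
    by_cases hi : a i = b i
    · simp [hq, hi]
    · have hne : a i - b i ≠ 0 := sub_ne_zero.mpr hi
      rw [hq]
      simp only [if_neg hi, abs_div]
      rw [div_le_one (abs_pos.mpr hne)]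
      exact abs_abs_sub_abs_le_abs_sub _ _
  have hqmul : ∀ i, q i * (a i - b i) = |a i| - |b i| := by
    intro i
    by_cases hi : a i = b i
    · simp [hq, hi]
    · rw [hq]; simp only [if_neg hi]
      exact div_mul_cancel₀ _ (sub_ne_zero.mpr hi)
  refine ⟨fun i => t * q i, fun j => ?_, ?_⟩
  · rw [abs_mul]
    calc |t| * |q j| ≤ |t| * 1 := by
          exact mul_le_mul_of_nonneg_left (hq1 j) (abs_nonneg t)
    _ = |t| := mul_one _
  · have expand : (matT M N (fun i => t * q i)).mulVec (a - b)
        = M.mulVec (a - b) + N.mulVec (fun j => t * (q j * (a j - b j))) := by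
      funext i
      simp only [matT, Matrix.mulVec, dotProduct, Matrix.of_apply, Pi.add_apply,
        Pi.sub_apply]
      rw [← Finset.sum_add_distrib]
      apply Finset.sum_congr rfl
      intro j _
      ring
    rw [expand]
    have : (fun j => t * (q j * (a j - b j))) = t • ((fun i => |a i|) - fun i => |b i|) := by
      funext j
      simp [hqmul j]
    rw [this, Matrix.mulVec_smul, Matrix.mulVec_sub, Matrix.mulVec_sub, smul_sub]
    abel

theorem gave (M N : Matrix m m ℝ) (h : ColumnWProperty (M + N) (M - N)) (f : m → ℝ) :
    ∃! y : m → ℝ, M.mulVec y + N.mulVec (fun i => |y i|) = f := by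
  cases isEmpty_or_nonempty m with
  | inl he =>
    haveI : Subsingleton (m → ℝ) := ⟨fun a b => funext fun i => isEmptyElim i⟩
    exact ⟨0, Subsingleton.elim _ _, fun _ _ => Subsingleton.elim _ _⟩
  | inr hne =>
    obtain ⟨c, hc, hcb⟩ := exists_expansion M N h
    set Φ : ℝ → (m → ℝ) → (m → ℝ) :=
      fun t y => M.mulVec y + t • N.mulVec (fun i => |y i|) with hΦ
    -- expansiveness of Φ t for |t| ≤ 1
    have key : ∀ t : ℝ, |t| ≤ 1 → ∀ a b : m → ℝ, c * ‖a - b‖ ≤ ‖Φ t a - Φ t b‖ := by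
      intro t ht a b
      obtain ⟨d, hd, hdiff⟩ := phi_diff M N t a b
      rw [hΦ]
      simp only []
      rw [hdiff]
      exact hcb d (fun j => (hd j).trans ht) _
    -- operator norm bound for N
    set L : ℝ := ‖(Matrix.mulVecLin N).toContinuousLinearMap‖ with hL
    have hL0 : 0 ≤ L := norm_nonneg _
    have hNle : ∀ v : m → ℝ, ‖N.mulVec v‖ ≤ L * ‖v‖ := by
      intro v
      have := (Matrix.mulVecLin N).toContinuousLinearMap.le_opNorm v
      simpa using this
    have habs : ∀ a b : m → ℝ,
        ‖(fun i => |a i|) - (fun i => |b i|)‖ ≤ ‖a - b‖ := by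
      intro a b
      apply pi_norm_le_iff_of_nonneg (norm_nonneg _) |>.mpr
      intro i
      have h1 : ‖(a - b) i‖ ≤ ‖a - b‖ := norm_le_pi_norm (a - b) i
      simp only [Pi.sub_apply, Real.norm_eq_abs] at h1 ⊢
      exact le_trans (abs_abs_sub_abs_le_abs_sub _ _) h1
    set δ : ℝ := c / (2 * (L + 1)) with hδ
    have hδpos : 0 < δ := div_pos hc (by linarith)
    -- the continuation step
    have step : ∀ t t' : ℝ, |t| ≤ 1 → |t'| ≤ 1 → |t' - t| ≤ δ →
        Function.Surjective (Φ t) → Function.Surjective (Φ t') := by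
      intro t t' ht ht' htt hs
      intro f
      -- choose a Lipschitz inverse of Φ t
      have gdef : ∀ w : m → ℝ, ∃ y, Φ t y = w := hs
      set g : (m → ℝ) → (m → ℝ) := fun w => (gdef w).choose with hg
      have gspec : ∀ w, Φ t (g w) = w := fun w => (gdef w).choose_spec
      have glip : ∀ w w', ‖g w - g w'‖ ≤ c⁻¹ * ‖w - w'‖ := by
        intro w w'
        have := key t ht (g w) (g w')
        rw [gspec, gspec] at this
        rw [← mul_le_mul_iff_right₀ hc, ← mul_assoc, mul_inv_cancel₀ hc.ne', one_mul]
        exact this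
      set s : ℝ := t' - t with hs'
      set Ψ : (m → ℝ) → (m → ℝ) :=
        fun y => g (f - s • N.mulVec (fun i => |y i|)) with hΨ
      have Ψlip : LipschitzWith (1/2 : ℝ≥0) Ψ := by
        apply LipschitzWith.of_dist_le_mul
        intro y y'
        rw [dist_eq_norm, dist_eq_norm]
        have h1 : ‖Ψ y - Ψ y'‖ ≤ c⁻¹ * ‖(f - s • N.mulVec (fun i => |y i|))
            - (f - s • N.mulVec (fun i => |y' i|))‖ := glip _ _
        have h2 : (f - s • N.mulVec (fun i => |y i|)) - (f - s • N.mulVec (fun i => |y' i|))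
            = s • (N.mulVec ((fun i => |y' i|) - (fun i => |y i|))) := by
          rw [Matrix.mulVec_sub, smul_sub]
          abel
        rw [h2, norm_smul] at h1
        have h3 : ‖N.mulVec ((fun i => |y' i|) - fun i => |y i|)‖
            ≤ L * ‖y' - y‖ := le_trans (hNle _) (by
              have := habs y' y
              nlinarith)
        have h4 : |s| ≤ δ := htt
        have h5 : c⁻¹ * (|s| * ‖N.mulVec ((fun i => |y' i|) - fun i => |y i|)‖)
            ≤ c⁻¹ * (δ * (L * ‖y' - y‖)) := by
          apply mul_le_mul_of_nonneg_left _ (inv_nonneg.mpr hc.le)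
          apply mul_le_mul h4 h3 (norm_nonneg _) hδpos.le
        have h6 : c⁻¹ * (δ * (L * ‖y' - y‖)) ≤ (1/2) * ‖y' - y‖ := by
          rw [hδ]
          have hny : 0 ≤ ‖y' - y‖ := norm_nonneg _
          rw [div_eq_mul_inv]
          have hc2 : c⁻¹ * (c * (2 * (L + 1))⁻¹ * (L * ‖y' - y‖))
              = (L / (2 * (L + 1))) * ‖y' - y‖ := by
            field_simp
          rw [hc2]
          apply mul_le_mul_of_nonneg_right _ hny
          rw [div_le_iff₀ (by linarith)]
          linarith
        have h7 : ‖y' - y‖ = ‖y - y'‖ := by rw [norm_sub_rev]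
        calc ‖Ψ y - Ψ y'‖ ≤ c⁻¹ * (|s| * ‖N.mulVec ((fun i => |y' i|) - fun i => |y i|)‖) := by
              simpa [Real.norm_eq_abs] using h1
        _ ≤ (1/2) * ‖y - y'‖ := by rw [← h7]; exact le_trans h5 h6
        _ = ((1/2 : ℝ≥0) : ℝ) * ‖y - y'‖ := by norm_num
      have cw : ContractingWith (1/2 : ℝ≥0) Ψ := ⟨by rw [one_div]; exact inv_lt_one_of_one_lt₀ one_lt_two, Ψlip⟩
      obtain ⟨y, hy, -⟩ := cw.exists_fixedPoint 0 (edist_ne_top _ _)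
      refine ⟨y, ?_⟩
      have hΦty : Φ t y = f - s • N.mulVec (fun i => |y i|) := by
        conv_lhs => rw [← hy]
        exact gspec _
      have : M.mulVec y + t • N.mulVec (fun i => |y i|)
          + s • N.mulVec (fun i => |y i|) = f := by
        rw [hΦ] at hΦty
        simp only [] at hΦty
        rw [hΦty]
        abel
      rw [hΦ]
      simp only []
      rw [show t' = t + s by rw [hs']; ring, add_smul]
      rw [← this]
      abel
    -- base case: Φ 0 surjective
    have surj0 : Function.Surjective (Φ 0) := by
      intro f
      have hdet : IsUnit M.det := by
        have h0 : matT M N 0 = M := by ext i j; simp [matT]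
        have := det_matT_pos M N h 0 (fun j => by simp)
        rw [h0] at this
        exact this.ne'.isUnit
      refine ⟨M⁻¹.mulVec f, ?_⟩
      rw [hΦ]
      simp only [zero_smul, add_zero, Matrix.mulVec_mulVec]
      rw [Matrix.mul_nonsing_inv _ hdet, Matrix.one_mulVec]
    -- induction along the homotopy
    have tmem : ∀ k : ℕ, |min 1 ((k : ℝ) * δ)| ≤ 1 := by
      intro k
      rw [abs_le]
      constructor
      · have : (0:ℝ) ≤ min 1 ((k : ℝ) * δ) :=
          le_min zero_le_one (mul_nonneg (Nat.cast_nonneg k) hδpos.le)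
        linarith
      · exact min_le_left _ _
    have main : ∀ k : ℕ, Function.Surjective (Φ (min 1 ((k : ℝ) * δ))) := by
      intro k
      induction k with
      | zero =>
        have : min (1:ℝ) ((0 : ℕ) * δ) = 0 := by
          simp
        rw [this]
        exact surj0
      | succ k ih =>
        apply step (min 1 ((k : ℝ) * δ)) _ (tmem k) (tmem (k+1)) _ ih
        have hk : (k : ℝ) * δ ≤ ((k:ℝ)+1) * δ := by nlinarith
        have h1 : min 1 ((k : ℝ) * δ) ≤ min 1 (((k:ℝ)+1) * δ) :=
          min_le_min le_rfl hk
        have h2 : min 1 (((k:ℝ)+1) * δ) ≤ min 1 ((k : ℝ) * δ) + δ := by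
          rcases le_total (1:ℝ) ((k : ℝ) * δ) with hcase | hcase
          · rw [min_eq_left hcase]
            have : min 1 (((k:ℝ)+1) * δ) ≤ 1 := min_le_left _ _
            linarith
          · rw [min_eq_right hcase]
            have : min 1 (((k:ℝ)+1) * δ) ≤ ((k:ℝ)+1) * δ := min_le_right _ _
            nlinarith
        rw [abs_le]
        push_cast
        constructor <;> [linarith; linarith]
    have surj1 : Function.Surjective (Φ 1) := by
      obtain ⟨k, hk⟩ := exists_nat_ge (1/δ)
      have h1 : (1:ℝ) ≤ (k : ℝ) * δ := by
        rw [div_le_iff₀ hδpos] at hk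
        linarith
      have := main k
      rwa [min_eq_left h1] at this
    obtain ⟨y, hy⟩ := surj1 f
    have hy' : M.mulVec y + N.mulVec (fun i => |y i|) = f := by
      rw [hΦ] at hy
      simpa using hy
    refine ⟨y, hy', ?_⟩
    intro y' hyy'
    have h1 : Φ 1 y' = Φ 1 y := by
      rw [hΦ]
      simp only [one_smul]
      rw [hyy', hy']
    have := key 1 (by norm_num) y' y
    rw [h1, sub_self, norm_zero] at this
    have hz : y' - y = 0 := by
      have h0 : ‖y' - y‖ ≤ 0 := by nlinarith
      exact norm_le_zero_iff.mp h0
    exact sub_eq_zero.mp hz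

end Aux

/-- With R = I ⊗ (AC⁻¹), S = I ⊗ B, if {R+S, R−S} has the column W-property then
for every F the NGAVME AX + B|CX| = F has exactly one solution. -/
theorem ngavme_unique_of_columnW {n : ℕ} (A B C : Matrix (Fin n) (Fin n) ℝ)
    (hC : IsUnit C)
    (h : ColumnWProperty
        ((1 : Matrix (Fin n) (Fin n) ℝ) ⊗ₖ (A * C⁻¹) + (1 : Matrix (Fin n) (Fin n) ℝ) ⊗ₖ B)
        ((1 : Matrix (Fin n) (Fin n) ℝ) ⊗ₖ (A * C⁻¹) - (1 : Matrix (Fin n) (Fin n) ℝ) ⊗ₖ B)) :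
    ∀ F : Matrix (Fin n) (Fin n) ℝ,
      ∃! X : Matrix (Fin n) (Fin n) ℝ, A * X + B * matAbs (C * X) = F := by
  intro F
  have hdetC : IsUnit C.det := (Matrix.isUnit_iff_isUnit_det C).mp hC
  have hCinv : C⁻¹ * C = 1 := Matrix.nonsing_inv_mul C hdetC
  have hCinv' : C * C⁻¹ = 1 := Matrix.mul_nonsing_inv C hdetC
  set M : Matrix (Fin n × Fin n) (Fin n × Fin n) ℝ :=
    (1 : Matrix (Fin n) (Fin n) ℝ) ⊗ₖ (A * C⁻¹) with hM
  set N : Matrix (Fin n × Fin n) (Fin n × Fin n) ℝ :=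
    (1 : Matrix (Fin n) (Fin n) ℝ) ⊗ₖ B with hN
  set f : Fin n × Fin n → ℝ := fun p => F p.2 p.1 with hf
  set yX : Matrix (Fin n) (Fin n) ℝ → (Fin n × Fin n → ℝ) :=
    fun X p => (C * X) p.2 p.1 with hyX
  have kmul : ∀ (G : Matrix (Fin n) (Fin n) ℝ) (z : Fin n × Fin n → ℝ) (p : Fin n × Fin n),
      (((1 : Matrix (Fin n) (Fin n) ℝ) ⊗ₖ G).mulVec z) p = ∑ j, G p.2 j * z (p.1, j) := by
    intro G z p
    simp [Matrix.mulVec, dotProduct, Fintype.sum_prod_type, Matrix.one_apply,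
      ite_mul, zero_mul, Matrix.kroneckerMap_apply]
  have hpoint : ∀ (X : Matrix (Fin n) (Fin n) ℝ) (p : Fin n × Fin n),
      (M.mulVec (yX X) + N.mulVec (fun i => |yX X i|)) p
        = (A * X + B * matAbs (C * X)) p.2 p.1 := by
    intro X p
    have hAX : (A * C⁻¹) * (C * X) = A * X := by
      rw [Matrix.mul_assoc, ← Matrix.mul_assoc C⁻¹ C X, hCinv, Matrix.one_mul]
    rw [Pi.add_apply, hM, hN, kmul, kmul]
    have h1 : ∑ j, (A * C⁻¹) p.2 j * (yX X) (p.1, j) = (A * X) p.2 p.1 := by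
      rw [← hAX, Matrix.mul_apply]
    have h2 : ∑ j, B p.2 j * |(yX X) (p.1, j)| = (B * matAbs (C * X)) p.2 p.1 := by
      rw [Matrix.mul_apply]
      rfl
    rw [h1, h2, Matrix.add_apply]
  have equiv : ∀ X : Matrix (Fin n) (Fin n) ℝ,
      (A * X + B * matAbs (C * X) = F) ↔
        M.mulVec (yX X) + N.mulVec (fun i => |yX X i|) = f := by
    intro X
    constructor
    · intro hX
      funext p
      rw [hpoint X p, hX]
    · intro hX
      ext i k
      have := congrFun hX (k, i)
      rw [hpoint X (k, i)] at this
      exact this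
  obtain ⟨y, hy, hyu⟩ := gave M N h f
  set X₀ : Matrix (Fin n) (Fin n) ℝ := C⁻¹ * Matrix.of (fun i k => y (k, i)) with hX₀
  have hCX₀ : C * X₀ = Matrix.of (fun i k => y (k, i)) := by
    rw [hX₀, ← Matrix.mul_assoc, hCinv', Matrix.one_mul]
  have hyX₀ : yX X₀ = y := by
    funext p
    rw [hyX]
    simp only [hCX₀, Matrix.of_apply]
  have hsol : A * X₀ + B * matAbs (C * X₀) = F := by
    rw [equiv X₀, hyX₀]
    exact hy
  refine ⟨X₀, hsol, ?_⟩
  intro X' hX'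
  have hy' : yX X' = y := hyu (yX X') ((equiv X').mp hX')
  have hCXeq : C * X' = C * X₀ := by
    ext i k
    have h1 : (C * X') i k = yX X' (k, i) := rfl
    have h2 : (C * X₀) i k = yX X₀ (k, i) := rfl
    rw [h1, h2, hy', hyX₀]
  calc X' = (C⁻¹ * C) * X' := by rw [hCinv, Matrix.one_mul]
  _ = C⁻¹ * (C * X') := by rw [Matrix.mul_assoc]
  _ = C⁻¹ * (C * X₀) := by rw [hCXeq]
  _ = (C⁻¹ * C) * X₀ := by rw [Matrix.mul_assoc]
  _ = X₀ := by rw [hCinv, Matrix.one_mul]
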